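/- Let R be a ring and N ≥ 2. An N-complex X of R-modules satisfies H_{(1)}^j(X) = 0 for all j ∈ ℤ if and only if every morphism of N-complexes μ_1^i(R) → X (for every i ∈ ℤ) is nullhomotopic, i.e. Hom_{K_N(Mod_R)}(μ_1^i(R), X) = 0 for all i. -/

import Mathlib

universe u v

variable {R : Type u} [Ring R]

/-- Transport of a graded component along an equality of degrees. -/
def lcast {M : ℤ → Type v} [∀ i, AddCommGroup (M i)] [∀ i, Module R (M i)]
    {a b : ℤ} (h : a = b) : M a →ₗ[R] M b := by subst h; exact LinearMap.id

/-- The `k`-fold iterate `d^k : M^i → M^(i+k)` of a degree-one map `d`. -/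
def dIter (M : ℤ → Type v) [∀ i, AddCommGroup (M i)] [∀ i, Module R (M i)]
    (d : ∀ i : ℤ, M i →ₗ[R] M (i + 1)) : ∀ (k : ℕ) (i : ℤ), M i →ₗ[R] M (i + k)
  | 0, i => lcast (by simp)
  | k + 1, i =>
    (lcast (show i + 1 + (k : ℕ) = i + ((k : ℕ) + 1 : ℕ) by push_cast; ring)).comp
      ((dIter M d k (i + 1)).comp (d i))

/-- An `N`-complex of `R`-modules. -/
structure NCx (R : Type u) [Ring R] (N : ℕ) where
  M : ℤ → Type v
  [acg : ∀ i, AddCommGroup (M i)]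
  [mod : ∀ i, Module R (M i)]
  d : ∀ i : ℤ, M i →ₗ[R] M (i + 1)
  dN : ∀ i : ℤ, dIter M d N i = 0

attribute [instance] NCx.acg NCx.mod

/-- A morphism of `N`-complexes. -/
structure NCxHom {N : ℕ} (A B : NCx.{u, v} R N) where
  f : ∀ i : ℤ, A.M i →ₗ[R] B.M i
  comm : ∀ i : ℤ, (B.d i).comp (f i) = (f (i + 1)).comp (A.d i)

/-- A morphism `f` of `N`-complexes is nullhomotopic if there is a family of maps
`s^j : A^j → B^(j-N+1)` with `f^i = ∑_{j=0}^{N-1} d^(N-j-1) ∘ s^(i+j) ∘ d^j`. -/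
def Nullhomotopic {N : ℕ} {A B : NCx.{u, v} R N} (φ : NCxHom A B) : Prop :=
  ∃ s : ∀ j : ℤ, A.M j →ₗ[R] B.M (j - N + 1),
    ∀ (i : ℤ) (x : A.M i),
      φ.f i x = ∑ j : Fin N,
        lcast (R := R) (M := B.M)
          (show i + ((j : ℕ) : ℤ) - (N : ℤ) + 1 + ((N - 1 - (j : ℕ) : ℕ) : ℤ) = i by
            have := j.isLt; omega)
          (dIter B.M B.d (N - 1 - (j : ℕ)) (i + ((j : ℕ) : ℤ) - (N : ℤ) + 1)
            (s (i + ((j : ℕ) : ℤ)) (dIter A.M A.d (j : ℕ) i x)))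

/-- The `N`-complex `μ_1^i(R)`: the free module `R` concentrated in degree `i`, with
zero differential.  (In degree `j` it is the module of functions ``PLift (j = i) → R`, which
is `R` for `j = i` and `0` otherwise.) -/
def mu1 (R : Type u) [Ring R] (N : ℕ) (hN : N ≠ 0) (i : ℤ) : NCx.{u, u} R N where
  M j := PLift (j = i) → R
  acg j := inferInstanceAs (AddCommGroup (PLift (j = i) → R))
  mod j := inferInstanceAs (Module R (PLift (j = i) → R))
  d _ := 0
  dN j := by
    obtain ⟨m, rfl⟩ := Nat.exists_eq_succ_of_ne_zero hN
    simp [dIter]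

section AuxLemmas

variable {M : ℤ → Type v} [∀ i, AddCommGroup (M i)] [∀ i, Module R (M i)]

lemma lcast_refl {a : ℤ} (h : a = a) (x : M a) :
    lcast (R := R) (M := M) h x = x := rfl

lemma lcast_lcast {a b c : ℤ} (h1 : a = b) (h2 : b = c) (x : M a) :
    lcast (R := R) (M := M) h2 (lcast (R := R) (M := M) h1 x) =
      lcast (R := R) (M := M) (h1.trans h2) x := by
  subst h1; subst h2; rfl

lemma lcast_dIter_lcast (d : ∀ i : ℤ, M i →ₗ[R] M (i + 1)) (k : ℕ) {a b c : ℤ}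
    (h : a = b) (h1 : a + k = c) (h2 : b + k = c) (y : M a) :
    lcast (R := R) (M := M) h2 (dIter M d k b (lcast (R := R) (M := M) h y)) =
      lcast (R := R) (M := M) h1 (dIter M d k a y) := by
  subst h; rfl

lemma mu1_d_eq (N : ℕ) (hN : N ≠ 0) (i j : ℤ) : (mu1 R N hN i).d j = 0 := rfl

lemma dIter_mu1_pos (N : ℕ) (hN : N ≠ 0) (i : ℤ) (k : ℕ) (hk : k ≠ 0) (i' : ℤ) :
    dIter (mu1 R N hN i).M (mu1 R N hN i).d k i' = 0 := by
  obtain ⟨m, rfl⟩ := Nat.exists_eq_succ_of_ne_zero hk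
  show (lcast _).comp ((dIter _ _ m (i' + 1)).comp ((mu1 R N hN i).d i')) = 0
  rw [mu1_d_eq, LinearMap.comp_zero, LinearMap.comp_zero]

lemma lcast_mu1_apply (N : ℕ) (hN : N ≠ 0) {i a b : ℤ} (q : a = b)
    (x : (mu1 R N hN i).M a) (u : PLift (b = i)) (h' : a = i) :
    lcast (R := R) (M := (mu1 R N hN i).M) q x u = x ⟨h'⟩ := by
  subst q; rfl

/-- The linear map `(PLift p → R) →ₗ[R] M'` sending `g` to `g ⟨hp⟩ • v`. -/
def smulMap (p : Prop) (hp : p) {M' : Type u} [AddCommGroup M'] [Module R M'] (v : M') :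
    (PLift p → R) →ₗ[R] M' where
  toFun g := g ⟨hp⟩ • v
  map_add' a b := by simp [add_smul]
  map_smul' r a := by simp [mul_smul, smul_eq_mul]

@[simp] lemma smulMap_apply (p : Prop) (hp : p) {M' : Type u} [AddCommGroup M']
    [Module R M'] (v : M') (g : PLift p → R) : smulMap p hp v g = g ⟨hp⟩ • v := rfl

end AuxLemmas

/-- Let `R` be a ring and `N ≥ 2`.  An `N`-complex `X` of `R`-modules satisfies
`H_(1)^j(X) = 0` for all `j` (every element of `ker(d : X^j → X^(j+1))` lies in the
image of `d^(N-1)`) if and only if for every `i ∈ ℤ` every morphism of `N`-complexes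
`μ_1^i(R) → X` is nullhomotopic, i.e. `Hom_{K_N(Mod_R)}(μ_1^i(R), X) = 0`. -/
theorem firstCohomology_vanishes_iff_hom_from_mu1_nullhomotopic
    (R : Type u) [Ring R] (N : ℕ) (hN : 2 ≤ N) (X : NCx.{u, u} R N) :
    (∀ (j : ℤ) (x : X.M j), X.d j x = 0 →
        ∃ y : X.M (j - ((N - 1 : ℕ) : ℤ)),
          lcast (R := R) (M := X.M) (by omega)
            (dIter X.M X.d (N - 1) (j - ((N - 1 : ℕ) : ℤ)) y) = x) ↔
      (∀ (i : ℤ) (φ : NCxHom (mu1 R N (by omega) i) X), Nullhomotopic φ) := by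
  have hN0 : N ≠ 0 := by omega
  constructor
  · intro hH i φ
    classical
    have hdx : X.d i (φ.f i (fun _ => 1)) = 0 := by
      have h := congrArg
        (fun g : (mu1 R N (by omega : N ≠ 0) i).M i →ₗ[R] X.M (i + 1) =>
          g (fun _ => 1)) (φ.comm i)
      exact h.trans (show φ.f (i + 1) ((mu1 R N (by omega : N ≠ 0) i).d i (fun _ => 1)) = 0 by
        rw [mu1_d_eq]; erw [LinearMap.zero_apply]; exact map_zero _)
    obtain ⟨y, hy⟩ := hH i (φ.f i (fun _ => 1)) hdx
    refine ⟨fun j => if h : j = i then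
      smulMap (j = i) h (lcast (R := R) (M := X.M)
        (show i - ((N - 1 : ℕ) : ℤ) = j - (N : ℤ) + 1 by rw [h]; push_cast; omega) y)
      else 0, ?_⟩
    intro i' x'
    by_cases hii : i' = i
    · subst hii
      have hx' : x' = @HSMul.hSMul R ((mu1 R N hN0 i').M i') _ _ (x' ⟨rfl⟩) (fun _ => (1 : R)) := by
        funext u
        obtain ⟨hu⟩ := u
        show x' ⟨hu⟩ = x' ⟨rfl⟩ * 1
        rw [mul_one]
      obtain ⟨c, v, hv, hx'⟩ : ∃ (c : R) (v : (mu1 R N hN0 i').M i'), v = (fun _ => (1 : R)) ∧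
          x' = c • v := ⟨_, _, rfl, hx'⟩
      rw [hx']
      simp only [map_smul]
      rw [← Finset.smul_sum]
      congr 1
      subst hv
      rw [Finset.sum_eq_single (⟨0, by omega⟩ : Fin N)]
      · have q1 : i' + (0:ℤ) - (N:ℤ) + 1 + ((N - 1 : ℕ) : ℤ) = i' := by push_cast; omega
        have q2 : i' - ((N - 1 : ℕ) : ℤ) = i' + (0:ℤ) - (N:ℤ) + 1 := by push_cast; omega
        have q3 : i' = i' + (0:ℤ) := by omega
        have q4 : i' + (0:ℤ) = i' := by omega
        have q5 : i' - ((N - 1 : ℕ) : ℤ) + ((N - 1 : ℕ) : ℤ) = i' := by push_cast; omega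
        show ((φ.f i') fun _ => (1:R)) =
          lcast (R := R) (M := X.M) q1
            (dIter X.M X.d (N - 1) (i' + (0:ℤ) - (N:ℤ) + 1)
              ((if h : i' + (0:ℤ) = i' then
                  smulMap (i' + (0:ℤ) = i') h (lcast (R := R) (M := X.M) q2 y)
                else 0)
                (lcast (R := R) (M := (mu1 R N hN0 i').M) q3 (fun _ => (1:R)))))
        have hone : (lcast (R := R) (M := (mu1 R N hN0 i').M) q3 (fun _ => (1:R))) ⟨q4⟩
            = (1:R) := lcast_mu1_apply (R := R) N hN0 q3 _ _ rfl
        simp only [dif_pos q4]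
        erw [smulMap_apply, hone, one_smul]
        rw [lcast_dIter_lcast (R := R) (M := X.M) X.d (N - 1) q2 q5 q1 y]
        exact hy.symm
      · intro b _ hb
        have hbv : (b : ℕ) ≠ 0 := fun h => hb (Fin.ext h)
        rw [dIter_mu1_pos (R := R) N hN0 i' _ hbv]
        erw [LinearMap.zero_apply, map_zero, map_zero, map_zero]
      · intro h; exact absurd (Finset.mem_univ _) h
    · have hx0 : x' = 0 := funext fun u => absurd u.down hii
      subst hx0
      simp
  · intro h j x hx
    classical
    have hcomm : ∀ k : ℤ, (X.d k).comp
        (if hk : k = j then smulMap (k = j) hk (lcast (R := R) (M := X.M) hk.symm x) else 0) =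
        ((if hk : k + 1 = j then
            smulMap (k + 1 = j) hk (lcast (R := R) (M := X.M) hk.symm x) else 0)).comp
          ((mu1 R N hN0 j).d k) := by
      intro k
      erw [show (mu1 R N hN0 j).d k = 0 from rfl, LinearMap.comp_zero]
      refine LinearMap.ext fun g => ?_
      show X.d k ((if hk : k = j then
        smulMap (k = j) hk (lcast (R := R) (M := X.M) hk.symm x) else 0) g) = 0
      by_cases hk : k = j
      · rw [dif_pos hk, smulMap_apply, map_smul]
        have hz : X.d k (lcast (R := R) (M := X.M) hk.symm x) = 0 := by
          subst hk; rw [lcast_refl]; exact hx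
        rw [hz, smul_zero]
      · rw [dif_neg hk]; simp
    obtain ⟨s, hs⟩ := h j
      { f := fun k => if hk : k = j then
          smulMap (k = j) hk (lcast (R := R) (M := X.M) hk.symm x) else 0
        comm := hcomm }
    have hsj := hs j (fun _ => (1:R))
    rw [Finset.sum_eq_single_of_mem (⟨0, by omega⟩ : Fin N) (Finset.mem_univ _) ?side] at hsj
    case side =>
      intro b _ hb
      have hbv : (b : ℕ) ≠ 0 := fun hh => hb (Fin.ext hh)
      rw [dIter_mu1_pos (R := R) N hN0 j _ hbv]
      erw [LinearMap.zero_apply]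
      simp
    have hL : ((if hk : j = j then
        smulMap (j = j) hk (lcast (R := R) (M := X.M) hk.symm x) else 0) (fun _ => (1:R))
          : X.M j) = x := by
      rw [dif_pos rfl, smulMap_apply, lcast_refl]
      exact one_smul R x
    have h2 := hL.symm.trans hsj
    have q1 : j + (0:ℤ) - (N:ℤ) + 1 + ((N - 1 : ℕ) : ℤ) = j := by push_cast; omega
    have q2 : j + (0:ℤ) - (N:ℤ) + 1 = j - ((N - 1 : ℕ) : ℤ) := by push_cast; omega
    have q3 : j = j + (0:ℤ) := by omega
    have q5 : j - ((N - 1 : ℕ) : ℤ) + ((N - 1 : ℕ) : ℤ) = j := by push_cast; omega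
    refine ⟨lcast (R := R) (M := X.M) q2
      (s (j + (0:ℤ)) (lcast (R := R) (M := (mu1 R N (by omega : N ≠ 0) j).M) q3
        (fun _ => (1:R)))), ?_⟩
    rw [lcast_dIter_lcast (R := R) (M := X.M) X.d (N - 1) q2 q1 q5
      (s (j + (0:ℤ)) (lcast (R := R) (M := (mu1 R N (by omega : N ≠ 0) j).M) q3
        (fun _ => (1:R))))]
    exact h2.symm
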